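/- Let T be a symmetric order-d tensor of dimension N, let v̂_1,…,v̂_r ∈ ℝ^N be unit vectors such that the tensors v̂_1^{⊗(d−1)},…,v̂_r^{⊗(d−1)} are linearly independent, and let γ̂_1,…,γ̂_r be nonzero reals. Then the matrix (⟨v̂_i,v̂_j⟩^{d−1})_{i,j≤r} is invertible (so flat(T) is well defined), and the following are equivalent: (i) ⟨T − Σ_{j=1}^r γ̂_j v̂_j^{⊗d}, v̂_i^{⊗(d−1)}⟩ = 0 for every i ∈ {1,…,r}; (ii) the stacked vector x = (γ̂_1 v̂_1, …, γ̂_r v̂_r) ∈ ℝ^{rN} satisfies flat(T)·x = γ̂_r·x, i.e., x is an eigenvector of flat(T) with eigenvalue γ̂_r. -/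

import Mathlib

open Matrix BigOperators Filter Topology MeasureTheory
open scoped ENNReal NNReal

noncomputable section

/-- An order-`D` tensor of dimension `N`. -/
abbrev Tensor (D N : ℕ) := (Fin D → Fin N) → ℝ

/-- A tensor is symmetric if it is invariant under every permutation of its indices. -/
def IsSymTensor {D N : ℕ} (T : Tensor D N) : Prop :=
  ∀ (π : Equiv.Perm (Fin D)) (i : Fin D → Fin N), T (i ∘ π) = T i

/-- `w^{⊗D}`, the rank-one tensor with entries `w_{i_1} ⋯ w_{i_D}`. -/
def tpow {D N : ℕ} (w : Fin N → ℝ) : Tensor D N := fun i => ∏ k, w (i k)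

/-- `⟨T, v^{⊗ m}⟩ ∈ ℝ^N` for an order-`(m+1)` tensor `T`:
the `j`-th entry is `Σ_{i_1,…,i_m} T_{i_1 … i_m j} v_{i_1} ⋯ v_{i_m}`. -/
def contractVec {m N : ℕ} (T : Tensor (m + 1) N) (v : Fin N → ℝ) : Fin N → ℝ :=
  fun j => ∑ f : Fin m → Fin N, T (Fin.snoc f j) * ∏ k, v (f k)

/-- `⟨T, v^{⊗ m}⟩`, an `N × N` matrix, for an order-`(m+2)` tensor `T`:
the `(i,j)` entry is `Σ_{i_1,…,i_m} T_{i_1 … i_m i j} v_{i_1} ⋯ v_{i_m}`. -/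
def contractMat {m N : ℕ} (T : Tensor (m + 2) N) (v : Fin N → ℝ) :
    Matrix (Fin N) (Fin N) ℝ :=
  Matrix.of fun i j => ∑ f : Fin m → Fin N, T (Fin.snoc (Fin.snoc f i) j) * ∏ k, v (f k)

/-- `⟨T, v^{⊗ D}⟩ ∈ ℝ` (full contraction). -/
def contractAll {D N : ℕ} (T : Tensor D N) (v : Fin N → ℝ) : ℝ :=
  ∑ f, T f * tpow v f

/-- Squared Frobenius norm of a tensor. -/
def frobSq {D N : ℕ} (T : Tensor D N) : ℝ := ∑ f, (T f) ^ 2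

/-- Entrywise (Hadamard) `k`-th power of a matrix. -/
def entryPow {m n : Type} (M : Matrix m n ℝ) (k : ℕ) : Matrix m n ℝ :=
  Matrix.of fun i j => (M i j) ^ k

/-- Gram matrix `(⟨v_i, v_j⟩)_{ij}`. -/
def gram {r N : ℕ} (v : Fin r → Fin N → ℝ) : Matrix (Fin r) (Fin r) ℝ :=
  Matrix.of fun i j => v i ⬝ᵥ v j

/-- `flatMat W A = (W ⊗ Id_N) · BlockDiag(A_1, …, A_r)`. -/
def flatMat {r N : ℕ} (W : Matrix (Fin r) (Fin r) ℝ) (A : Fin r → Matrix (Fin N) (Fin N) ℝ) :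
    Matrix (Fin r × Fin N) (Fin r × Fin N) ℝ :=
  (Matrix.kroneckerMap (· * ·) W (1 : Matrix (Fin N) (Fin N) ℝ)) *
    ((Matrix.blockDiagonal A).reindex (Equiv.prodComm (Fin N) (Fin r))
      (Equiv.prodComm (Fin N) (Fin r)))

/-- `Ŵ = (R^{⊙ k})⁻¹ · diag(γ_r/γ_1, …, γ_r/γ_r)` where `R` is the Gram matrix of `v`. -/
def What {r N : ℕ} (k : ℕ) (γ : Fin (r + 1) → ℝ) (v : Fin (r + 1) → Fin N → ℝ) :
    Matrix (Fin (r + 1)) (Fin (r + 1)) ℝ :=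
  (entryPow (gram v) k)⁻¹ * Matrix.diagonal (fun i => γ (Fin.last r) / γ i)

/-- Symmetrization of a noise tensor: `X_{i_1…i_D} = (1/D!) Σ_{π} W_{i_{π(1)}…i_{π(D)}}`. -/
def symNoise {D N : ℕ} (W : Tensor D N) : Tensor D N :=
  fun i => (1 / (Nat.factorial D : ℝ)) * ∑ π : Equiv.Perm (Fin D), W (i ∘ π)

/-- The spiked tensor `T = Σ_j β_j u_j^{⊗ D} + N^{-1/2} X` (here the dimension is `N`). -/
def spikedT {D r N : ℕ} (β : Fin r → ℝ) (u : Fin r → Fin N → ℝ) (X : Tensor D N) :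
    Tensor D N :=
  fun f => (∑ j, β j * tpow (u j) f) + (1 / Real.sqrt N) * X f

/-- The holomorphic square root of `z² − κ²` on `ℂ ∖ [−|κ|,|κ|]` asymptotic to `z`
at infinity, realized as `(z−|κ|)^{1/2} (z+|κ|)^{1/2}` with principal branches. -/
def sqrtBr (κ : ℝ) (z : ℂ) : ℂ :=
  (z - (|κ| : ℝ)) ^ ((1 : ℂ) / 2) * (z + (|κ| : ℝ)) ^ ((1 : ℂ) / 2)

/-- `ζ_κ(z) = (2/κ²)(−z + √(z²−κ²))` for `κ ≠ 0`, and `ζ_0(z) = −1/z`. -/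
def zetaC (κ : ℝ) (z : ℂ) : ℂ :=
  if κ = 0 then -z⁻¹ else (2 / (κ : ℂ) ^ 2) * (-z + sqrtBr κ z)

/-- The semicircle-type measure `μ_κ`: density `(2/(πκ²))·√((κ²−x²)_+)` for `κ ≠ 0`,
and `δ_0` for `κ = 0`. -/
def semicirc (κ : ℝ) : Measure ℝ :=
  if κ = 0 then Measure.dirac 0
  else MeasureTheory.volume.withDensity fun x =>
    ENNReal.ofReal ((2 / (Real.pi * κ ^ 2)) * Real.sqrt (max (κ ^ 2 - x ^ 2) 0))

/-- Empirical spectral measure of a real square matrix: the uniform measure on (the real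
parts of) the roots of its characteristic polynomial over `ℂ`, with multiplicity. -/
def empSpec {n : Type} [Fintype n] [DecidableEq n] (A : Matrix n n ℝ) : Measure ℝ :=
  ((Fintype.card n : ℝ≥0∞))⁻¹ •
    (Multiset.map (fun z => Measure.dirac z.re) ((A.map Complex.ofReal).charpoly.roots)).sum

/-- The resolvent `(A − z·Id)⁻¹` of a real matrix, as a complex matrix. -/
def resolv {n : Type} [Fintype n] [DecidableEq n] (A : Matrix n n ℝ) (z : ℂ) :
    Matrix n n ℂ :=
  (A.map Complex.ofReal - z • 1)⁻¹

/-! ### Auxiliary lemmas for `stmt1` -/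

set_option maxHeartbeats 1600000

lemma tpow_snoc' {m N : ℕ} (w : Fin N → ℝ) (f : Fin m → Fin N) (a : Fin N) :
    tpow (D := m + 1) w (Fin.snoc f a) = tpow w f * w a := by
  unfold tpow
  rw [← Fin.prod_snoc (w a) (fun k => w (f k))]
  exact Finset.prod_congr rfl fun k _ => congrFun (Fin.comp_snoc w f a) k

lemma sum_snoc' {m N : ℕ} (F : (Fin (m + 1) → Fin N) → ℝ) :
    ∑ g : Fin (m + 1) → Fin N, F g
      = ∑ f : Fin m → Fin N, ∑ b : Fin N, F (Fin.snoc f b) := by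
  rw [← (Fin.snocEquiv (fun _ => Fin N)).sum_comp F, Fintype.sum_prod_type_right]
  simp [Fin.snocEquiv]

lemma symm_swap' {d N : ℕ} (T : Tensor (d + 3) N) (hT : IsSymTensor T)
    (f : Fin (d + 1) → Fin N) (a b : Fin N) :
    T (Fin.snoc (Fin.snoc f a) b) = T (Fin.snoc (Fin.snoc f b) a) := by
  have h := hT (Equiv.swap (Fin.castSucc (Fin.last (d + 1))) (Fin.last (d + 2)))
    (Fin.snoc (Fin.snoc f a) b)
  rw [← h]
  congr 1
  funext x
  simp only [Function.comp_apply]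
  rcases eq_or_ne x (Fin.last (d + 2)) with rfl | hx
  · rw [Equiv.swap_apply_right, Fin.snoc_castSucc, Fin.snoc_last, Fin.snoc_last]
  · rcases eq_or_ne x (Fin.castSucc (Fin.last (d + 1))) with rfl | hx2
    · rw [Equiv.swap_apply_left, Fin.snoc_last, Fin.snoc_castSucc, Fin.snoc_last]
    · rw [Equiv.swap_apply_of_ne_of_ne hx2 hx]
      obtain ⟨y, rfl⟩ := Fin.exists_castSucc_eq.2 hx
      have hy : y ≠ Fin.last (d + 1) := fun h => hx2 (by rw [h])
      obtain ⟨z, rfl⟩ := Fin.exists_castSucc_eq.2 hy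
      rw [Fin.snoc_castSucc, Fin.snoc_castSucc, Fin.snoc_castSucc, Fin.snoc_castSucc]

set_option maxHeartbeats 1000000 in
lemma hAc_lem {d N : ℕ} (T : Tensor (d + 3) N) (hT : IsSymTensor T)
    (v : Fin N → ℝ) (a : Fin N) :
    ∑ b, contractMat (m := d + 1) T v a b * v b = contractVec (m := d + 2) T v a := by
  have key : ∀ (b : Fin N) (f : Fin (d + 1) → Fin N),
      T (Fin.snoc (Fin.snoc f b) a) * ∏ k : Fin (d + 2), v ((Fin.snoc f b : Fin (d + 2) → Fin N) k)
        = (T (Fin.snoc (Fin.snoc f a) b) * ∏ k, v (f k)) * v b := by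
    intro b f
    rw [symm_swap' T hT f a b]
    have hp : (∏ k : Fin (d + 2), v ((Fin.snoc f b : Fin (d + 2) → Fin N) k)) = (∏ k, v (f k)) * v b :=
      tpow_snoc' v f b
    rw [hp]
    ring
  calc ∑ b, contractMat (m := d + 1) T v a b * v b
      = ∑ b, ∑ f : Fin (d + 1) → Fin N,
          (T (Fin.snoc (Fin.snoc f a) b) * ∏ k, v (f k)) * v b := by
        refine Finset.sum_congr rfl fun b _ => ?_
        show (∑ f : Fin (d + 1) → Fin N, T (Fin.snoc (Fin.snoc f a) b) * ∏ k, v (f k)) * v b = _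
        rw [Finset.sum_mul]
    _ = ∑ f : Fin (d + 1) → Fin N, ∑ b,
          (T (Fin.snoc (Fin.snoc f a) b) * ∏ k, v (f k)) * v b := Finset.sum_comm
    _ = contractVec (m := d + 2) T v a := by
        show _ = ∑ g : Fin (d + 2) → Fin N, T (Fin.snoc g a) * ∏ k, v (g k)
        rw [sum_snoc' (fun g => T (Fin.snoc g a) * ∏ k, v (g k))]
        refine Finset.sum_congr rfl fun f _ => Finset.sum_congr rfl fun b _ => (key b f).symm


lemma sum_tpow_mul' {m N : ℕ} (v w : Fin N → ℝ) :
    ∑ f : Fin m → Fin N, tpow (D := m) v f * tpow w f = (v ⬝ᵥ w) ^ m := by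
  unfold tpow dotProduct
  rw [← Fin.prod_const, Finset.prod_univ_sum, Fintype.piFinset_univ]
  exact Finset.sum_congr rfl fun f _ => (Finset.prod_mul_distrib).symm

lemma flatMat_apply' {r N : ℕ} (W : Matrix (Fin r) (Fin r) ℝ)
    (A : Fin r → Matrix (Fin N) (Fin N) ℝ) (i l : Fin r) (a b : Fin N) :
    flatMat W A (i, a) (l, b) = W i l * A l a b := by
  simp only [flatMat, Matrix.mul_apply, Matrix.kroneckerMap_apply, Matrix.reindex_apply,
    Matrix.submatrix_apply, Equiv.prodComm_symm, Equiv.prodComm_apply, Prod.swap,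
    Matrix.blockDiagonal_apply, Fintype.sum_prod_type, Matrix.one_apply]
  simp [mul_ite, ite_mul, Finset.sum_ite_eq, Finset.sum_ite_eq', eq_comm]

lemma gram_isUnit' {m r N : ℕ} (v : Fin r → Fin N → ℝ)
    (hli : LinearIndependent ℝ (fun i => tpow (D := m) (v i))) :
    IsUnit (entryPow (gram v) m).det := by
  rw [isUnit_iff_ne_zero]
  intro hdet
  obtain ⟨x, hx0, hx⟩ := Matrix.exists_mulVec_eq_zero_iff.2 hdet
  have h2 : ∑ f : Fin m → Fin N, (∑ i, x i * tpow (v i) f) ^ 2 = 0 := by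
    have expand : ∀ f : Fin m → Fin N, (∑ i, x i * tpow (v i) f) ^ 2
        = ∑ i, ∑ j, x i * x j * (tpow (v i) f * tpow (v j) f) := by
      intro f
      rw [sq, Finset.sum_mul_sum]
      exact Finset.sum_congr rfl fun i _ => Finset.sum_congr rfl fun j _ => by ring
    calc ∑ f : Fin m → Fin N, (∑ i, x i * tpow (v i) f) ^ 2
        = ∑ i, ∑ j, x i * x j * ∑ f : Fin m → Fin N, tpow (v i) f * tpow (v j) f := by
          simp_rw [expand, Finset.mul_sum]
          rw [Finset.sum_comm]
          exact Finset.sum_congr rfl fun i _ => Finset.sum_comm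
      _ = x ⬝ᵥ ((entryPow (gram v) m).mulVec x) := by
          simp only [dotProduct, Matrix.mulVec, entryPow, _root_.gram, Matrix.of_apply,
            Finset.mul_sum, sum_tpow_mul']
          exact Finset.sum_congr rfl fun i _ => Finset.sum_congr rfl fun j _ => by ring
      _ = 0 := by rw [hx, dotProduct_zero]
  have h4 : ∀ f : Fin m → Fin N, (∑ i, x i * tpow (v i) f) = 0 := by
    intro f
    have := (Finset.sum_eq_zero_iff_of_nonneg (fun f _ => sq_nonneg _)).1 h2 f (Finset.mem_univ f)
    exact (pow_eq_zero_iff two_ne_zero).1 this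
  have h5 := Fintype.linearIndependent_iff.1 hli x ?_
  · exact hx0 (funext fun i => h5 i)
  · funext f
    simp only [Finset.sum_apply, Pi.smul_apply, smul_eq_mul, Pi.zero_apply]
    exact h4 f

lemma hdiff_lem {d r N : ℕ} (T : Tensor (d + 3) N)
    (γhat : Fin (r + 1) → ℝ) (vhat : Fin (r + 1) → Fin N → ℝ) (i : Fin (r + 1)) (a : Fin N) :
    contractVec (m := d + 2) (fun f => T f - ∑ j, γhat j * tpow (vhat j) f) (vhat i) a
      = contractVec (m := d + 2) T (vhat i) a
        - ∑ j, entryPow (gram vhat) (d + 2) i j * (γhat j * vhat j a) := by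
  have e1 : contractVec (m := d + 2) (fun f => T f - ∑ j, γhat j * tpow (vhat j) f) (vhat i) a
      = contractVec (m := d + 2) T (vhat i) a
        - ∑ f : Fin (d + 2) → Fin N,
            (∑ j, γhat j * tpow (vhat j) (Fin.snoc f a)) * ∏ k, vhat i (f k) := by
    show (∑ f : Fin (d + 2) → Fin N,
        (T (Fin.snoc f a) - ∑ j, γhat j * tpow (vhat j) (Fin.snoc f a)) * ∏ k, vhat i (f k)) = _
    rw [show contractVec (m := d + 2) T (vhat i) a
        = ∑ f : Fin (d + 2) → Fin N, T (Fin.snoc f a) * ∏ k, vhat i (f k) from rfl]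
    rw [← Finset.sum_sub_distrib]
    exact Finset.sum_congr rfl fun f _ => by ring
  rw [e1]
  congr 1
  calc (∑ f : Fin (d + 2) → Fin N,
        (∑ j, γhat j * tpow (vhat j) (Fin.snoc f a)) * ∏ k, vhat i (f k))
      = ∑ f : Fin (d + 2) → Fin N, ∑ j,
          γhat j * vhat j a * (tpow (vhat j) f * tpow (vhat i) f) := by
        refine Finset.sum_congr rfl fun f _ => ?_
        rw [Finset.sum_mul]
        refine Finset.sum_congr rfl fun j _ => ?_
        rw [tpow_snoc']
        show γhat j * (tpow (vhat j) f * vhat j a) * tpow (vhat i) f = _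
        ring
    _ = ∑ j, ∑ f : Fin (d + 2) → Fin N,
          γhat j * vhat j a * (tpow (vhat j) f * tpow (vhat i) f) := Finset.sum_comm
    _ = ∑ j, γhat j * vhat j a * ∑ f : Fin (d + 2) → Fin N,
          tpow (vhat j) f * tpow (vhat i) f :=
        Finset.sum_congr rfl fun j _ => (Finset.mul_sum _ _ _).symm
    _ = ∑ j, entryPow (gram vhat) (d + 2) i j * (γhat j * vhat j a) := by
        refine Finset.sum_congr rfl fun j _ => ?_
        rw [sum_tpow_mul']
        show γhat j * vhat j a * (vhat j ⬝ᵥ vhat i) ^ (d + 2)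
          = (vhat i ⬝ᵥ vhat j) ^ (d + 2) * (γhat j * vhat j a)
        rw [dotProduct_comm]
        ring

lemma hflat_lem {d r N : ℕ} (T : Tensor (d + 3) N) (hT : IsSymTensor T)
    (γhat : Fin (r + 1) → ℝ) (vhat : Fin (r + 1) → Fin N → ℝ) (hγ : ∀ i, γhat i ≠ 0)
    (i : Fin (r + 1)) (a : Fin N) :
    ((flatMat (What (d + 2) γhat vhat)
        (fun k => contractMat (m := d + 1) T (vhat k))).mulVec
      (fun p => γhat p.1 * vhat p.1 p.2)) (i, a)
      = γhat (Fin.last r) * ∑ l, (entryPow (gram vhat) (d + 2))⁻¹ i l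
          * contractVec (m := d + 2) T (vhat l) a := by
  have hW : ∀ l, What (d + 2) γhat vhat i l
      = (entryPow (gram vhat) (d + 2))⁻¹ i l * (γhat (Fin.last r) / γhat l) := by
    intro l
    show ((entryPow (gram vhat) (d + 2))⁻¹
      * Matrix.diagonal (fun j => γhat (Fin.last r) / γhat j)) i l = _
    rw [Matrix.mul_diagonal]
  calc ((flatMat (What (d + 2) γhat vhat)
        (fun k => contractMat (m := d + 1) T (vhat k))).mulVec
          (fun p => γhat p.1 * vhat p.1 p.2)) (i, a)
      = ∑ l, ∑ b, What (d + 2) γhat vhat i l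
          * contractMat (m := d + 1) T (vhat l) a b * (γhat l * vhat l b) := by
        show (∑ q : Fin (r + 1) × Fin N, flatMat (What (d + 2) γhat vhat)
            (fun k => contractMat (m := d + 1) T (vhat k)) (i, a) q
            * (γhat q.1 * vhat q.1 q.2)) = _
        rw [Fintype.sum_prod_type]
        exact Finset.sum_congr rfl fun l _ => Finset.sum_congr rfl fun b _ => by
          rw [flatMat_apply']
    _ = ∑ l, What (d + 2) γhat vhat i l * γhat l
          * ∑ b, contractMat (m := d + 1) T (vhat l) a b * vhat l b := by
        refine Finset.sum_congr rfl fun l _ => ?_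
        rw [Finset.mul_sum]
        exact Finset.sum_congr rfl fun b _ => by ring
    _ = ∑ l, γhat (Fin.last r) * ((entryPow (gram vhat) (d + 2))⁻¹ i l
          * contractVec (m := d + 2) T (vhat l) a) := by
        refine Finset.sum_congr rfl fun l _ => ?_
        rw [hAc_lem T hT (vhat l) a, hW l]
        have e : γhat (Fin.last r) / γhat l * γhat l = γhat (Fin.last r) :=
          div_mul_cancel₀ _ (hγ l)
        calc (entryPow (gram vhat) (d + 2))⁻¹ i l * (γhat (Fin.last r) / γhat l) * γhat l
              * contractVec (m := d + 2) T (vhat l) a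
            = (entryPow (gram vhat) (d + 2))⁻¹ i l * (γhat (Fin.last r) / γhat l * γhat l)
              * contractVec (m := d + 2) T (vhat l) a := by ring
          _ = γhat (Fin.last r) * ((entryPow (gram vhat) (d + 2))⁻¹ i l
              * contractVec (m := d + 2) T (vhat l) a) := by rw [e]; ring
    _ = γhat (Fin.last r) * ∑ l, (entryPow (gram vhat) (d + 2))⁻¹ i l
          * contractVec (m := d + 2) T (vhat l) a := by rw [Finset.mul_sum]

/-- the KKT equations are equivalent to the eigenvector equation for
`flat(T)`.  Order of the tensor is `d + 3 ≥ 3`, rank `r + 1 ≥ 1`. -/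
theorem stmt1 (d r N : ℕ) (hN : 1 ≤ N)
    (T : Tensor (d + 3) N) (hT : IsSymTensor T)
    (γhat : Fin (r + 1) → ℝ) (vhat : Fin (r + 1) → Fin N → ℝ)
    (hunit : ∀ i, vhat i ⬝ᵥ vhat i = 1)
    (hγ : ∀ i, γhat i ≠ 0)
    (hli : LinearIndependent ℝ (fun i => tpow (D := d + 2) (vhat i))) :
    IsUnit (entryPow (gram vhat) (d + 2)).det ∧
    ((∀ i : Fin (r + 1),
        contractVec (m := d + 2)
          (fun f => T f - ∑ j, γhat j * tpow (vhat j) f) (vhat i) = 0) ↔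
      (flatMat (What (d + 2) γhat vhat)
            (fun k => contractMat (m := d + 1) T (vhat k))).mulVec
          (fun p => γhat p.1 * vhat p.1 p.2) =
        γhat (Fin.last r) • (fun p : Fin (r + 1) × Fin N => γhat p.1 * vhat p.1 p.2)) := by
  have hG : IsUnit (entryPow (gram vhat) (d + 2)).det := gram_isUnit' vhat hli
  refine ⟨hG, ?_⟩
  set G := entryPow (gram vhat) (d + 2) with hGdef
  set c : Fin (r + 1) → Fin N → ℝ := fun l => contractVec (m := d + 2) T (vhat l) with hc
  have key1 : (∀ i : Fin (r + 1),
      contractVec (m := d + 2)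
        (fun f => T f - ∑ j, γhat j * tpow (vhat j) f) (vhat i) = 0)
      ↔ (∀ (i : Fin (r + 1)) (a : Fin N), c i a = ∑ j, G i j * (γhat j * vhat j a)) := by
    constructor
    · intro h i a
      have h1 := congrFun (h i) a
      rw [hdiff_lem T γhat vhat i a] at h1
      have h2 : c i a - ∑ j, G i j * (γhat j * vhat j a) = 0 := h1
      linarith [h2]
    · intro h i
      funext a
      show contractVec (m := d + 2)
        (fun f => T f - ∑ j, γhat j * tpow (vhat j) f) (vhat i) a = 0
      rw [hdiff_lem T γhat vhat i a]
      have h2 : c i a - ∑ j, G i j * (γhat j * vhat j a) = 0 := by rw [h i a, sub_self]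
      exact h2
  have key2 : ((flatMat (What (d + 2) γhat vhat)
        (fun k => contractMat (m := d + 1) T (vhat k))).mulVec
          (fun p => γhat p.1 * vhat p.1 p.2)
      = γhat (Fin.last r) • (fun p : Fin (r + 1) × Fin N => γhat p.1 * vhat p.1 p.2))
      ↔ (∀ (i : Fin (r + 1)) (a : Fin N), ∑ l, G⁻¹ i l * c l a = γhat i * vhat i a) := by
    rw [funext_iff]
    constructor
    · intro h i a
      have h1 := h (i, a)
      rw [hflat_lem T hT γhat vhat hγ i a] at h1
      simp only [Pi.smul_apply, smul_eq_mul] at h1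
      exact mul_left_cancel₀ (hγ (Fin.last r)) h1
    · intro h p
      obtain ⟨i, a⟩ := p
      rw [hflat_lem T hT γhat vhat hγ i a]
      simp only [Pi.smul_apply, smul_eq_mul]
      rw [h i a]
  rw [key1, key2]
  constructor
  · intro h i a
    have hc1 : (fun l => c l a) = G.mulVec (fun j => γhat j * vhat j a) :=
      funext fun l => h l a
    have h2 : (∑ l, G⁻¹ i l * c l a) = (G⁻¹.mulVec (fun l => c l a)) i := rfl
    rw [h2, hc1, Matrix.mulVec_mulVec, Matrix.nonsing_inv_mul G hG, Matrix.one_mulVec]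
  · intro h i a
    have hu : (fun j => γhat j * vhat j a) = G⁻¹.mulVec (fun l => c l a) :=
      funext fun j => (h j a).symm
    have h2 : G.mulVec (fun j => γhat j * vhat j a) = fun l => c l a := by
      rw [hu, Matrix.mulVec_mulVec, Matrix.mul_nonsing_inv G hG, Matrix.one_mulVec]
    have h3 := congrFun h2 i
    rw [← h3]
    rfl

end
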